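/- For n ≥ 2 and positive reals a_1 ≤ a_2 ≤ ... ≤ a_n, equality of the cyclic sum ∑ a_i^{a_{i+1}} (indices mod n) with ∑ a_i^{a_i} holds if and only if a_1 = a_2 = ... = a_n. -/
import Mathlib

open Real Finset

lemma lemA {x y : ℝ} (hx : 0 < x) (hxy : x ≤ y) (hy : y ≤ 1) :
    x ≤ y * x ^ (y - x) := by
  have h1 : (0:ℝ) ≤ 1 + x - y := by linarith
  have h2 : (0:ℝ) ≤ y - x := by linarith
  have hgm : x ^ (1 + x - y) * (1:ℝ) ^ (y - x) ≤ (1 + x - y) * x + (y - x) * 1 :=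
    Real.geom_mean_le_arith_mean2_weighted h1 h2 hx.le zero_le_one (by ring)
  rw [Real.one_rpow, mul_one, mul_one] at hgm
  have hy' : x ^ (1 + x - y) ≤ y := by nlinarith
  calc x = x ^ ((1 + x - y) + (y - x)) := by norm_num
    _ = x ^ (1 + x - y) * x ^ (y - x) := Real.rpow_add hx _ _
    _ ≤ y * x ^ (y - x) :=
        mul_le_mul_of_nonneg_right hy' (Real.rpow_nonneg hx.le _)

lemma lemB {x y z : ℝ} (hx : 0 < x) (hxy : x < y) (hyz : y ≤ z) :
    x ^ y - x ^ x < z ^ y - z ^ x := by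
  have hxz : x < z := hxy.trans_le hyz
  by_cases hcase : y ≤ 1 ∨ 1 ≤ x
  · have hmono : StrictMonoOn (fun w : ℝ => w ^ y - w ^ x) (Set.Icc x z) := by
      apply strictMonoOn_of_deriv_pos (convex_Icc x z)
      · apply ContinuousOn.sub
        · exact continuousOn_id.rpow_const fun w hw => Or.inl (ne_of_gt (hx.trans_le hw.1))
        · exact continuousOn_id.rpow_const fun w hw => Or.inl (ne_of_gt (hx.trans_le hw.1))
      · intro w hw
        rw [interior_Icc] at hw
        have hw0 : 0 < w := hx.trans hw.1
        have hd : HasDerivAt (fun w : ℝ => w ^ y - w ^ x) (y * w ^ (y-1) - x * w ^ (x-1)) w :=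
          (Real.hasDerivAt_rpow_const (Or.inl hw0.ne')).sub
            (Real.hasDerivAt_rpow_const (Or.inl hw0.ne'))
        rw [hd.deriv]
        have key : x < y * w ^ (y - x) := by
          rcases le_or_gt 1 w with h1w | h1w
          · have : (1:ℝ) ≤ w ^ (y - x) :=
              Real.one_le_rpow h1w (by linarith)
            nlinarith
          · rcases hcase with hy1 | hx1
            · have e1 : x ^ (y - x) < w ^ (y - x) :=
                Real.rpow_lt_rpow hx.le hw.1 (by linarith)
              have hA : x ≤ y * x ^ (y - x) := lemA hx hxy.le hy1
              nlinarith
            · linarith [hx1.trans hw.1.le]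
        have : x * w ^ (x-1) < y * w ^ (y-1) := by
          have e : w ^ (y-1) = w ^ (y-x) * w ^ (x-1) := by
            rw [← Real.rpow_add hw0]; ring_nf
          rw [e]
          calc x * w ^ (x-1) < (y * w ^ (y-x)) * w ^ (x-1) :=
            mul_lt_mul_of_pos_right key (Real.rpow_pos_of_pos hw0 _)
          _ = y * (w ^ (y-x) * w ^ (x-1)) := by ring
        linarith
    exact hmono (Set.left_mem_Icc.2 hxz.le) (Set.right_mem_Icc.2 hxz.le) hxz
  · push_neg at hcase
    obtain ⟨hy1, hx1⟩ := hcase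
    have h1 : x ^ y < x ^ x := Real.rpow_lt_rpow_of_exponent_gt hx hx1 hxy
    have h2 : z ^ x ≤ z ^ y := Real.rpow_le_rpow_of_exponent_le (by linarith) hxy.le
    linarith

theorem stmt_2 (n : ℕ) (hn : 2 ≤ n) (a : Fin n → ℝ)
    (hpos : ∀ i, 0 < a i) (hmono : Monotone a) :
    ∑ i : Fin n, a i ^ a ⟨(i.val + 1) % n, Nat.mod_lt _ (by omega)⟩ =
      ∑ i : Fin n, a i ^ a i ↔ ∀ i j : Fin n, a i = a j := by
  have hnz : NeZero n := ⟨by omega⟩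
  have h1v : (1 : Fin n).val = 1 := by
    rw [Fin.val_one']; exact Nat.mod_eq_of_lt (by omega)
  have hmk : ∀ (i : Fin n) (h : (i.val + 1) % n < n),
      (⟨(i.val + 1) % n, h⟩ : Fin n) = i + 1 := by
    intro i h
    ext
    rw [Fin.add_def, h1v]
  constructor
  · intro hS
    by_contra hne
    push_neg at hne
    obtain ⟨i₁, j₁, hij⟩ := hne
    simp only [hmk] at hS
    set lst : Fin n := ⟨n - 1, by omega⟩ with hlst
    have hbetween : ∀ k : Fin n, a ⟨0, by omega⟩ ≤ a k ∧ a k ≤ a lst := by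
      intro k
      have hkl := k.isLt
      constructor
      · exact hmono (Fin.le_def.2 (by simp))
      · exact hmono (Fin.le_def.2 (by simp [hlst]; omega))
    have hfl : a ⟨0, by omega⟩ < a lst := by
      rcases eq_or_lt_of_le (hbetween lst).1 with he | h
      · exfalso
        apply hij
        have e1 : a i₁ = a ⟨0, by omega⟩ :=
          le_antisymm (he ▸ (hbetween i₁).2) (hbetween i₁).1
        have e2 : a j₁ = a ⟨0, by omega⟩ :=
          le_antisymm (he ▸ (hbetween j₁).2) (hbetween j₁).1
        rw [e1, e2]
      · exact h
    have hadj : ∃ (k : ℕ) (hk : k + 1 < n), a ⟨k, by omega⟩ < a ⟨k + 1, hk⟩ := by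
      by_contra hc
      push_neg at hc
      have heq : ∀ (k : ℕ) (hk : k < n), a ⟨k, hk⟩ = a ⟨0, by omega⟩ := by
        intro k
        induction k with
        | zero => intro hk; rfl
        | succ m ih =>
          intro hk
          have hle : a ⟨m, by omega⟩ ≤ a ⟨m + 1, hk⟩ := hmono (Fin.le_def.2 (by simp))
          have := hc m hk
          have e : a ⟨m + 1, hk⟩ = a ⟨m, by omega⟩ := le_antisymm this hle
          rw [e, ih (by omega)]
      exact absurd (heq (n - 1) (by omega)) (ne_of_gt hfl)
    obtain ⟨k, hk1, hklt⟩ := hadj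
    set i₀ : Fin n := ⟨k, by omega⟩ with hi₀
    set M := a lst with hM
    have hsucc : ∀ (i : Fin n), i.val + 1 < n → (i + 1).val = i.val + 1 := by
      intro i hi
      rw [Fin.add_def, h1v]
      exact Nat.mod_eq_of_lt hi
    have key : ∀ i : Fin n, a i ^ a (i + 1) - a i ^ a i ≤ M ^ a (i + 1) - M ^ a i := by
      intro i
      by_cases hil : i = lst
      · rw [hil]
      · have hiv : i.val + 1 < n := by
          have h2 := i.isLt
          have : i.val ≠ n - 1 := fun hcon => hil (Fin.ext (by rw [hcon]))
          omega
        have hv1 : (i + 1).val = i.val + 1 := hsucc i hiv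
        have hle1 : a i ≤ a (i + 1) := hmono (Fin.le_def.2 (by omega))
        have hle2 : a (i + 1) ≤ M := hmono (Fin.le_def.2 (by simp [hlst]; omega))
        rcases eq_or_lt_of_le hle1 with he | hlt
        · rw [← he]; simp
        · exact (lemB (hpos i) hlt hle2).le
    have hvk : (i₀ + 1).val = k + 1 := hsucc i₀ (by simpa [hi₀] using hk1)
    have hik : a i₀ < a (i₀ + 1) := by
      have : (i₀ + 1) = (⟨k + 1, hk1⟩ : Fin n) := Fin.ext (by rw [hvk])
      rw [this]
      exact hklt
    have hle2₀ : a (i₀ + 1) ≤ M := hmono (Fin.le_def.2 (by simp [hlst]; omega))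
    have strict : a i₀ ^ a (i₀ + 1) - a i₀ ^ a i₀ < M ^ a (i₀ + 1) - M ^ a i₀ :=
      lemB (hpos i₀) hik hle2₀
    have hsum0 : ∑ i : Fin n, (M ^ a (i + 1) - M ^ a i) = 0 := by
      rw [Finset.sum_sub_distrib]
      have : ∑ i : Fin n, M ^ a (i + 1) = ∑ i : Fin n, M ^ a i :=
        Fintype.sum_equiv (Equiv.addRight (1 : Fin n)) _ _ (fun i => rfl)
      rw [this, sub_self]
    have hlt : ∑ i : Fin n, a i ^ a (i + 1) < ∑ i : Fin n, a i ^ a i := by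
      calc ∑ i : Fin n, a i ^ a (i + 1)
          < ∑ i : Fin n, (a i ^ a i + (M ^ a (i + 1) - M ^ a i)) := by
            apply Finset.sum_lt_sum
            · intro i _
              have := key i
              linarith
            · exact ⟨i₀, Finset.mem_univ _, by linarith [strict]⟩
        _ = ∑ i : Fin n, a i ^ a i := by
            rw [Finset.sum_add_distrib, hsum0, add_zero]
    exact absurd hS (ne_of_lt hlt)
  · intro hall
    refine Finset.sum_congr rfl fun i _ => ?_
    exact congrArg (a i ^ ·) (hall _ i)
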